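/- In the tensor algebra A = TensorAlgebra ℝ (ℝ^d), for every m ≥ 1 the ℝ-linear span of the set { π_m( E_m(v₁) * E_m(v₂) * ⋯ * E_m(v_j) ) : j ∈ ℕ, v₁, …, v_j ∈ ℝ^d } equals the entire degree-m homogeneous component of A (i.e. the range of π_m). In other words, the degree-m components of products of truncated exponentials of elements of ℝ^d — the projections to level m of group-like elements of the free nilpotent group — span the full m-th tensor level. -/
import Mathlib


open TensorAlgebra

/-- The truncated exponential `E_N(v) = Σ_{m=0}^{N} (1/m!) ι(v)^m` in the tensor algebra. -/
noncomputable def truncExp {d : ℕ} (N : ℕ) (v : Fin d → ℝ) :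
    TensorAlgebra ℝ (Fin d → ℝ) :=
  ∑ m ∈ Finset.range (N + 1), ((m.factorial : ℝ))⁻¹ • TensorAlgebra.ι ℝ v ^ m

/-- The projection onto the degree-`m` homogeneous component of the tensor algebra, for its
standard grading in which `ι(ℝ^d)` is the degree-1 component. -/
noncomputable def degProj (d m : ℕ) :
    TensorAlgebra ℝ (Fin d → ℝ) →ₗ[ℝ] TensorAlgebra ℝ (Fin d → ℝ) :=
  GradedAlgebra.proj
    (fun n : ℕ =>
      LinearMap.range (TensorAlgebra.ι ℝ : (Fin d → ℝ) →ₗ[ℝ] TensorAlgebra ℝ (Fin d → ℝ)) ^ n)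
    m

section Aux

/-- Expansion of a noncommutative product of sums. -/
lemma aux_list_prod_sum {R : Type*} [Semiring R] {κ : Type*} [Fintype κ] :
    ∀ (j : ℕ) (g : Fin j → κ → R),
      (List.ofFn fun t => ∑ k : κ, g t k).prod
        = ∑ k : Fin j → κ, (List.ofFn fun t => g t (k t)).prod
  | 0, g => by simp
  | j + 1, g => by
    rw [List.ofFn_succ, List.prod_cons, aux_list_prod_sum j (fun t => g t.succ),
      Fintype.sum_mul_sum,
      ← Equiv.sum_comp (Fin.consEquiv fun _ : Fin (j + 1) => κ)
        (fun k => (List.ofFn fun t => g t (k t)).prod),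
      Fintype.sum_prod_type]
    refine Finset.sum_congr rfl fun k0 _ => Finset.sum_congr rfl fun kt _ => ?_
    simp [List.ofFn_succ, Fin.consEquiv]

/-- Pulling scalars out of a list product. -/
lemma aux_list_prod_smul {R A : Type*} [CommSemiring R] [Semiring A] [Algebra R A] :
    ∀ (j : ℕ) (c : Fin j → R) (x : Fin j → A),
      (List.ofFn fun t => c t • x t).prod = (∏ t, c t) • (List.ofFn x).prod
  | 0, c, x => by simp
  | j + 1, c, x => by
    rw [List.ofFn_succ, List.prod_cons, aux_list_prod_smul j (fun t => c t.succ)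
      (fun t => x t.succ), Fin.prod_univ_succ, smul_mul_smul_comm]
    congr 1
    rw [List.ofFn_succ, List.prod_cons]

lemma aux_mem_pow (d : ℕ) :
    ∀ (j : ℕ) (v : Fin j → (Fin d → ℝ)) (k : Fin j → ℕ),
      (List.ofFn fun t => TensorAlgebra.ι ℝ (v t) ^ k t).prod ∈
        (LinearMap.range
          (TensorAlgebra.ι ℝ : (Fin d → ℝ) →ₗ[ℝ] TensorAlgebra ℝ (Fin d → ℝ))) ^ (∑ t, k t)
  | 0, v, k => by
    rw [List.ofFn_zero, List.prod_nil, Finset.univ_eq_empty, Finset.sum_empty, pow_zero]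
    exact Submodule.one_le.mp le_rfl
  | j + 1, v, k => by
    rw [List.ofFn_succ, List.prod_cons, Fin.sum_univ_succ, pow_add]
    exact Submodule.mul_mem_mul (Submodule.pow_mem_pow _ (LinearMap.mem_range_self _ _) _)
      (aux_mem_pow d j _ _)

lemma aux_degProj_of_mem {d m n : ℕ} {x : TensorAlgebra ℝ (Fin d → ℝ)}
    (hx : x ∈
      (LinearMap.range
        (TensorAlgebra.ι ℝ : (Fin d → ℝ) →ₗ[ℝ] TensorAlgebra ℝ (Fin d → ℝ))) ^ n) :
    degProj d m x = if n = m then x else 0 := by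
  rw [degProj, GradedAlgebra.proj_apply]
  split
  · next h => subst h; exact DirectSum.decompose_of_mem_same _ hx
  · next h => exact DirectSum.decompose_of_mem_ne _ hx h

/-- Key expansion: the degree-`m` part of a product of truncated exponentials of scaled
vectors. -/
lemma aux_key (d m : ℕ) (v : Fin m → (Fin d → ℝ)) (c : Fin m → ℝ) :
    degProj d m ((List.ofFn fun t : Fin m => truncExp m (c t • v t)).prod)
      = ∑ k : Fin m → Fin (m + 1),
          (if (∑ t, ((k t : ℕ))) = m then
              (∏ t, (c t ^ (k t : ℕ) * (((k t : ℕ)).factorial : ℝ)⁻¹)) else 0) •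
            (List.ofFn fun t => TensorAlgebra.ι ℝ (v t) ^ (k t : ℕ)).prod := by
  have htr : ∀ t : Fin m, truncExp m (c t • v t)
      = ∑ k : Fin (m + 1),
          (c t ^ (k : ℕ) * (((k : ℕ)).factorial : ℝ)⁻¹) • TensorAlgebra.ι ℝ (v t) ^ (k : ℕ) := by
    intro t
    rw [truncExp, ← Fin.sum_univ_eq_sum_range]
    refine Finset.sum_congr rfl fun k _ => ?_
    rw [map_smul, smul_pow, smul_smul, mul_comm]
  simp_rw [htr]
  rw [aux_list_prod_sum]
  rw [map_sum]
  refine Finset.sum_congr rfl fun k _ => ?_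
  rw [aux_list_prod_smul, map_smul,
    aux_degProj_of_mem (aux_mem_pow d m v fun t => (k t : ℕ)), smul_ite, smul_zero,
    ite_smul, zero_smul]

/-- Inclusion–exclusion: recovering a pure product of `ι`'s from degree-`m` parts of
products of truncated exponentials. -/
lemma aux_IE (d m : ℕ) (hm : 1 ≤ m) (v : Fin m → (Fin d → ℝ)) :
    ∑ c : Fin m → Bool,
        (∏ t, (if c t then (1 : ℝ) else -1)) •
          degProj d m ((List.ofFn fun t : Fin m => truncExp m (if c t then v t else 0)).prod)
      = (List.ofFn fun t : Fin m => TensorAlgebra.ι ℝ (v t)).prod := by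
  have h0 : ∀ (c : Fin m → Bool) (t : Fin m),
      (if c t then v t else 0) = (if c t then (1 : ℝ) else 0) • v t := by
    intro c t; by_cases h : c t <;> simp [h]
  have hc : ∀ c : Fin m → Bool,
      degProj d m ((List.ofFn fun t : Fin m => truncExp m (if c t then v t else 0)).prod)
        = ∑ k : Fin m → Fin (m + 1),
          (if (∑ t, ((k t : ℕ))) = m then
              (∏ t, ((if c t then (1 : ℝ) else 0) ^ (k t : ℕ) *
                (((k t : ℕ)).factorial : ℝ)⁻¹)) else 0) •
            (List.ofFn fun t => TensorAlgebra.ι ℝ (v t) ^ (k t : ℕ)).prod := by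
    intro c
    have he : (fun t : Fin m => truncExp m (if c t then v t else 0))
        = fun t => truncExp m ((if c t then (1 : ℝ) else 0) • v t) := by
      funext t; rw [h0]
    rw [he, aux_key]
  rw [show (∑ c : Fin m → Bool,
        (∏ t, (if c t then (1 : ℝ) else -1)) •
          degProj d m ((List.ofFn fun t : Fin m => truncExp m (if c t then v t else 0)).prod))
      = ∑ c : Fin m → Bool, (∏ t, (if c t then (1 : ℝ) else -1)) •
          ∑ k : Fin m → Fin (m + 1),
          (if (∑ t, ((k t : ℕ))) = m then
              (∏ t, ((if c t then (1 : ℝ) else 0) ^ (k t : ℕ) *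
                (((k t : ℕ)).factorial : ℝ)⁻¹)) else 0) •
            (List.ofFn fun t => TensorAlgebra.ι ℝ (v t) ^ (k t : ℕ)).prod from
    Finset.sum_congr rfl fun c _ => by rw [hc c]]
  simp_rw [Finset.smul_sum, smul_smul]
  rw [Finset.sum_comm]
  simp_rw [← Finset.sum_smul]
  have hW : ∀ k : Fin m → Fin (m + 1),
      (∑ c : Fin m → Bool, (∏ t, (if c t then (1 : ℝ) else -1)) *
          (if (∑ t, ((k t : ℕ))) = m then
              (∏ t, ((if c t then (1 : ℝ) else 0) ^ (k t : ℕ) *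
                (((k t : ℕ)).factorial : ℝ)⁻¹)) else 0))
        = if (∑ t, ((k t : ℕ))) = m then
            ∏ t, ((1 - (0 : ℝ) ^ (k t : ℕ)) * (((k t : ℕ)).factorial : ℝ)⁻¹) else 0 := by
    intro k
    by_cases h : (∑ t, ((k t : ℕ))) = m
    · simp only [if_pos h]
      simp_rw [← Finset.prod_mul_distrib]
      rw [← Fintype.prod_sum fun (t : Fin m) (b : Bool) =>
        (if b then (1 : ℝ) else -1) *
          ((if b then (1 : ℝ) else 0) ^ (k t : ℕ) * (((k t : ℕ)).factorial : ℝ)⁻¹)]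
      refine Finset.prod_congr rfl fun t _ => ?_
      rw [Fintype.sum_bool]
      simp only [if_pos, if_neg, one_pow, Bool.cond_true]
      simp
      ring
    · simp only [if_neg h, mul_zero, Finset.sum_const_zero]
  rw [show (∑ k : Fin m → Fin (m + 1),
        (∑ c : Fin m → Bool, (∏ t, (if c t then (1 : ℝ) else -1)) *
          (if (∑ t, ((k t : ℕ))) = m then
              (∏ t, ((if c t then (1 : ℝ) else 0) ^ (k t : ℕ) *
                (((k t : ℕ)).factorial : ℝ)⁻¹)) else 0)) •
            (List.ofFn fun t => TensorAlgebra.ι ℝ (v t) ^ (k t : ℕ)).prod)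
      = ∑ k : Fin m → Fin (m + 1),
          (if (∑ t, ((k t : ℕ))) = m then
            ∏ t, ((1 - (0 : ℝ) ^ (k t : ℕ)) * (((k t : ℕ)).factorial : ℝ)⁻¹) else 0) •
            (List.ofFn fun t => TensorAlgebra.ι ℝ (v t) ^ (k t : ℕ)).prod from
    Finset.sum_congr rfl fun k _ => by rw [hW k]]
  have h1m : (1 : ℕ) < m + 1 := by omega
  rw [Finset.sum_eq_single (fun _ : Fin m => (⟨1, h1m⟩ : Fin (m + 1)))]
  · have hsum : (∑ t : Fin m, ((⟨1, h1m⟩ : Fin (m + 1)) : ℕ)) = m := by simp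
    rw [if_pos hsum]
    simp
  · intro k _ hk
    by_cases h : (∑ t, ((k t : ℕ))) = m
    · have hex : ∃ t, (k t : ℕ) = 0 := by
        by_contra hall
        push_neg at hall
        apply hk
        funext t
        refine Fin.ext ?_
        show (k t : ℕ) = 1
        by_contra ht
        have h2 : 2 ≤ (k t : ℕ) := by
          have := hall t; omega
        have hlt : (∑ s : Fin m, 1) < ∑ s, (k s : ℕ) :=
          Finset.sum_lt_sum (fun i _ => Nat.one_le_iff_ne_zero.mpr (hall i))
            ⟨t, Finset.mem_univ t, by omega⟩
        simp only [Finset.sum_const, Finset.card_univ, Fintype.card_fin, smul_eq_mul,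
          mul_one] at hlt
        omega
      obtain ⟨t, ht⟩ := hex
      rw [if_pos h]
      rw [Finset.prod_eq_zero (Finset.mem_univ t) (by simp [ht]), zero_smul]
    · rw [if_neg h, zero_smul]
  · intro h; exact absurd (Finset.mem_univ _) h

end Aux

/-- The degree-`m` components of products of truncated exponentials of elements of `ℝ^d` —
the level-`m` projections of group-like elements — span the full `m`-th tensor level,
i.e. the range of the degree-`m` projection. -/
theorem stmt10 {d : ℕ} (hd : 1 ≤ d) (m : ℕ) (hm : 1 ≤ m) :
    Submodule.span ℝ
        {x : TensorAlgebra ℝ (Fin d → ℝ) |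
          ∃ j : ℕ, ∃ v : Fin j → (Fin d → ℝ),
            x = degProj d m ((List.ofFn fun t : Fin j => truncExp m (v t)).prod)} =
      LinearMap.range (degProj d m) := by
  apply le_antisymm
  · rw [Submodule.span_le]
    rintro x ⟨j, v, rfl⟩
    exact ⟨_, rfl⟩
  · rintro x ⟨y, rfl⟩
    have hy : degProj d m y ∈
        (LinearMap.range
          (TensorAlgebra.ι ℝ : (Fin d → ℝ) →ₗ[ℝ] TensorAlgebra ℝ (Fin d → ℝ))) ^ m := by
      rw [degProj, GradedAlgebra.proj_apply]
      exact SetLike.coe_mem _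
    rw [Submodule.pow_eq_span_pow_set] at hy
    refine Submodule.span_le.mpr ?_ hy
    
    intro z hz
    rw [Set.mem_pow] at hz
    obtain ⟨f, hf⟩ := hz
    have hmem : ∀ t : Fin m, ∃ u : Fin d → ℝ, TensorAlgebra.ι ℝ u = (f t : TensorAlgebra ℝ (Fin d → ℝ)) :=
      fun t => LinearMap.mem_range.mp (SetLike.mem_coe.mp (f t).2)
    choose w hw using hmem
    have hz' : z = (List.ofFn fun t : Fin m => TensorAlgebra.ι ℝ (w t)).prod := by
      rw [← hf]
      exact congrArg List.prod (congrArg List.ofFn (funext fun t => (hw t).symm))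
    rw [hz', ← aux_IE d m hm w]
    exact Submodule.sum_mem _ fun c _ => Submodule.smul_mem _ _
      (Submodule.subset_span ⟨m, fun t => if c t then w t else 0, rfl⟩)
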